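/- Let r > 0, let γ : [0,1] → ℝ² be a continuous rectifiable path of length ℓ, and let c₁, …, c_k ∈ ℝ² be points whose pairwise distances satisfy ‖c_i − c_j‖ ≥ 2r for i ≠ j (so the closed discs B(c_i, r) have pairwise disjoint interiors). If the image of γ intersects each closed disc B(c_i, r), then k · πr² ≤ 4rℓ + 4πr²; equivalently, k ≤ 4(ℓ/(πr) + 1). -/

import Mathlib

set_option maxHeartbeats 1000000

namespace CardDiscsAux
open MeasureTheory Metric Set Real

lemma slice_subset (s d v : ℝ) (hd : 0 ≤ d) :
    {u : ℝ | v ^ 2 + (u - d) ^ 2 ≤ s ^ 2 ∧ s ^ 2 < v ^ 2 + u ^ 2} ⊆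
      Ioc (Real.sqrt (s ^ 2 - v ^ 2)) (Real.sqrt (s ^ 2 - v ^ 2) + d) := by
  intro u hu
  obtain ⟨h1, h2⟩ := hu
  obtain ⟨w, hw⟩ : ∃ w : ℝ, w = Real.sqrt (s ^ 2 - v ^ 2) := ⟨_, rfl⟩
  rw [← hw]
  have hW : (u - d) ^ 2 ≤ s ^ 2 - v ^ 2 := by linarith
  have hWnn : (0:ℝ) ≤ s ^ 2 - v ^ 2 := le_trans (by positivity) hW
  have hw2 : w ^ 2 = s ^ 2 - v ^ 2 := by rw [hw]; exact Real.sq_sqrt hWnn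
  have hwnn : 0 ≤ w := hw ▸ Real.sqrt_nonneg _
  have habs : |u - d| ≤ w := by
    rw [← Real.sqrt_sq_eq_abs, hw]
    exact Real.sqrt_le_sqrt hW
  rw [abs_le] at habs
  have hu2 : w ^ 2 < u ^ 2 := by rw [hw2]; linarith
  have hlt : w < |u| := by nlinarith [sq_abs u, abs_nonneg u]
  rcases abs_cases u with ⟨he, _⟩ | ⟨he, hneg⟩
  · rw [he] at hlt
    exact ⟨hlt, by linarith [habs.2]⟩
  · exfalso
    rw [he] at hlt
    linarith [habs.1]

lemma slice_bound (s d : ℝ) (hs : 0 ≤ s) (hd : 0 ≤ d) :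
    volume (closedBall (EuclideanSpace.single (1 : Fin 2) d) s
      \ closedBall (0 : EuclideanSpace ℝ (Fin 2)) s) ≤ ENNReal.ofReal (2 * s * d) := by
  have hΦ : MeasurePreserving (fun x : EuclideanSpace ℝ (Fin 2) => ((x 0 : ℝ), (x 1 : ℝ)))
      volume volume := by
    have := (volume_preserving_finTwoArrow ℝ).comp
      (EuclideanSpace.volume_preserving_symm_measurableEquiv_toLp (ι := Fin 2))
    convert this using 1 <;> rfl
  obtain ⟨S, hS⟩ : ∃ S : Set (ℝ × ℝ),
      S = {p : ℝ × ℝ | p.1 ^ 2 + (p.2 - d) ^ 2 ≤ s ^ 2 ∧ s ^ 2 < p.1 ^ 2 + p.2 ^ 2} := ⟨_, rfl⟩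
  have m1 : Measurable fun p : ℝ × ℝ => p.1 ^ 2 + (p.2 - d) ^ 2 := by measurability
  have m2 : Measurable fun p : ℝ × ℝ => p.1 ^ 2 + p.2 ^ 2 := by measurability
  have hSmeas : MeasurableSet S := hS ▸
    (measurableSet_le m1 measurable_const).inter (measurableSet_lt measurable_const m2)
  have hset : closedBall (EuclideanSpace.single (1 : Fin 2) d) s
      \ closedBall (0 : EuclideanSpace ℝ (Fin 2)) s
      = (fun x : EuclideanSpace ℝ (Fin 2) => ((x 0 : ℝ), (x 1 : ℝ))) ⁻¹' S := by
    ext x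
    have hdist1 : dist x (EuclideanSpace.single (1 : Fin 2) d)
        = Real.sqrt (x 0 ^ 2 + (x 1 - d) ^ 2) := by
      rw [EuclideanSpace.dist_eq, Fin.sum_univ_two]
      simp [Real.dist_eq, sq_abs, EuclideanSpace.single_apply]
    have hdist0 : dist x (0 : EuclideanSpace ℝ (Fin 2))
        = Real.sqrt (x 0 ^ 2 + x 1 ^ 2) := by
      rw [EuclideanSpace.dist_eq, Fin.sum_univ_two]
      simp [Real.dist_eq, sq_abs]
    simp only [mem_diff, mem_closedBall, mem_preimage, hS, mem_setOf_eq, hdist1, hdist0,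
      not_le]
    constructor
    · rintro ⟨h1, h2⟩
      refine ⟨?_, ?_⟩
      · have := Real.sq_sqrt (by positivity : (0:ℝ) ≤ x 0 ^ 2 + (x 1 - d) ^ 2)
        nlinarith [Real.sqrt_nonneg (x 0 ^ 2 + (x 1 - d) ^ 2)]
      · nlinarith [Real.sq_sqrt (by positivity : (0:ℝ) ≤ x 0 ^ 2 + x 1 ^ 2),
          Real.sqrt_nonneg (x 0 ^ 2 + x 1 ^ 2)]
    · rintro ⟨h1, h2⟩
      constructor
      · rw [show s = Real.sqrt (s ^ 2) by rw [Real.sqrt_sq hs]]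
        exact Real.sqrt_le_sqrt h1
      · rw [show s = Real.sqrt (s ^ 2) by rw [Real.sqrt_sq hs]]
        exact Real.sqrt_lt_sqrt (by positivity) h2
  rw [hset, hΦ.measure_preimage hSmeas.nullMeasurableSet, Measure.volume_eq_prod,
    Measure.prod_apply hSmeas]
  have hslice : ∀ v : ℝ, volume (Prod.mk v ⁻¹' S)
      ≤ (Icc (-s) s).indicator (fun _ => ENNReal.ofReal d) v := by
    intro v
    have hpre : Prod.mk v ⁻¹' S
        = {u : ℝ | v ^ 2 + (u - d) ^ 2 ≤ s ^ 2 ∧ s ^ 2 < v ^ 2 + u ^ 2} := by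
      ext u; simp [hS]
    by_cases hv : v ∈ Icc (-s) s
    · rw [indicator_of_mem hv, hpre]
      calc volume {u : ℝ | v ^ 2 + (u - d) ^ 2 ≤ s ^ 2 ∧ s ^ 2 < v ^ 2 + u ^ 2}
          ≤ volume (Ioc (Real.sqrt (s ^ 2 - v ^ 2)) (Real.sqrt (s ^ 2 - v ^ 2) + d)) :=
            measure_mono (slice_subset s d v hd)
        _ = ENNReal.ofReal d := by rw [Real.volume_Ioc, add_sub_cancel_left]
    · rw [indicator_of_notMem hv, hpre]
      have hempty : {u : ℝ | v ^ 2 + (u - d) ^ 2 ≤ s ^ 2 ∧ s ^ 2 < v ^ 2 + u ^ 2}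
          ⊆ (∅ : Set ℝ) := by
        intro u hu
        rw [mem_setOf_eq] at hu
        exfalso
        apply hv
        rw [mem_Icc]
        have h1 := hu.1
        constructor <;> nlinarith [sq_nonneg (u - d)]
      calc volume {u : ℝ | v ^ 2 + (u - d) ^ 2 ≤ s ^ 2 ∧ s ^ 2 < v ^ 2 + u ^ 2}
          ≤ volume (∅ : Set ℝ) := measure_mono hempty
        _ = 0 := measure_empty
  calc ∫⁻ v, volume (Prod.mk v ⁻¹' S) ∂volume
      ≤ ∫⁻ v, (Icc (-s) s).indicator (fun _ => ENNReal.ofReal d) v ∂volume :=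
        lintegral_mono hslice
    _ = ENNReal.ofReal d * volume (Icc (-s) s) := by
        rw [lintegral_indicator measurableSet_Icc, setLIntegral_const]
    _ ≤ ENNReal.ofReal (2 * s * d) := by
        rw [Real.volume_Icc, ← ENNReal.ofReal_mul hd]
        apply ENNReal.ofReal_le_ofReal; nlinarith


lemma ball_diff_bound (a b : EuclideanSpace ℝ (Fin 2)) (s : ℝ) (hs : 0 ≤ s) :
    volume (closedBall b s \ closedBall a s) ≤ ENNReal.ofReal (2 * s * dist a b) := by
  obtain ⟨d, hd⟩ : ∃ d : ℝ, d = dist a b := ⟨_, rfl⟩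
  have hd0 : 0 ≤ d := hd ▸ dist_nonneg
  have hnorm : ‖b - a‖ = ‖EuclideanSpace.single (1 : Fin 2) d‖ := by
    rw [EuclideanSpace.norm_single, ← dist_eq_norm, Real.norm_eq_abs, abs_of_nonneg hd0, hd, dist_comm]
  set f := Submodule.reflection (ℝ ∙ ((b - a) - EuclideanSpace.single (1 : Fin 2) d))ᗮ with hf
  have hfb : f (b - a) = EuclideanSpace.single (1 : Fin 2) d := Submodule.reflection_sub hnorm
  have hT : MeasurePreserving (fun x : EuclideanSpace ℝ (Fin 2) => f (x - a))
      volume volume :=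
    f.measurePreserving.comp (measurePreserving_sub_right volume a)
  have hset : closedBall b s \ closedBall a s
      = (fun x : EuclideanSpace ℝ (Fin 2) => f (x - a)) ⁻¹'
        (closedBall (EuclideanSpace.single (1 : Fin 2) d) s
          \ closedBall (0 : EuclideanSpace ℝ (Fin 2)) s) := by
    ext x
    simp only [mem_diff, mem_preimage, mem_closedBall]
    have e1 : dist (f (x - a)) (EuclideanSpace.single (1 : Fin 2) d) = dist x b := by
      rw [← hfb, f.dist_map, dist_sub_right]
    have e2 : dist (f (x - a)) (0 : EuclideanSpace ℝ (Fin 2)) = dist x a := by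
      rw [← map_zero f, f.dist_map, dist_zero_right, ← dist_eq_norm]
    rw [e1, e2]
  rw [hset, hT.measure_preimage
    ((measurableSet_closedBall.diff measurableSet_closedBall).nullMeasurableSet)]
  rw [hd]
  exact hd ▸ slice_bound s d hs hd0


lemma vol_ball_two (x : EuclideanSpace ℝ (Fin 2)) (t : ℝ) (ht : 0 ≤ t) :
    volume (ball x t) = ENNReal.ofReal (Real.pi * t ^ 2) := by
  rw [EuclideanSpace.volume_ball]
  simp only [Fintype.card_fin]
  rw [show ((2 : ℕ) : ℝ) / 2 + 1 = 2 by norm_num, Real.Gamma_two,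
    Real.sq_sqrt Real.pi_nonneg, ← ENNReal.ofReal_pow ht, ← ENNReal.ofReal_mul (by positivity),
    div_one]
  ring_nf

lemma vol_closedBall_two (x : EuclideanSpace ℝ (Fin 2)) (t : ℝ) (ht : 0 ≤ t) :
    volume (closedBall x t) = ENNReal.ofReal (Real.pi * t ^ 2) := by
  rw [Measure.addHaar_closedBall_eq_addHaar_ball, vol_ball_two x t ht]

lemma chain_bound (q : ℕ → EuclideanSpace ℝ (Fin 2)) (s : ℝ) (hs : 0 ≤ s) (n : ℕ) :
    volume (⋃ j ∈ Finset.range (n + 1), closedBall (q j) s)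
      ≤ ENNReal.ofReal (Real.pi * s ^ 2)
        + ∑ j ∈ Finset.range n, ENNReal.ofReal (2 * s * dist (q j) (q (j + 1))) := by
  induction n with
  | zero =>
    have : (⋃ j ∈ Finset.range (0 + 1), closedBall (q j) s) = closedBall (q 0) s := by
      simp
    rw [this, Finset.range_zero, Finset.sum_empty, add_zero]
    exact le_of_eq (vol_closedBall_two _ s hs)
  | succ n ih =>
    have hsub : (⋃ j ∈ Finset.range (n + 2), closedBall (q j) s)
        ⊆ (⋃ j ∈ Finset.range (n + 1), closedBall (q j) s)
          ∪ (closedBall (q (n + 1)) s \ closedBall (q n) s) := by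
      intro x hx
      simp only [mem_iUnion, Finset.mem_range, exists_prop] at hx
      obtain ⟨j, hj, hxj⟩ := hx
      by_cases hj' : j < n + 1
      · left
        simp only [mem_iUnion, Finset.mem_range, exists_prop]
        exact ⟨j, hj', hxj⟩
      · have hje : j = n + 1 := by omega
        subst hje
        by_cases hxn : x ∈ closedBall (q n) s
        · left
          simp only [mem_iUnion, Finset.mem_range, exists_prop]
          exact ⟨n, by omega, hxn⟩
        · right
          exact ⟨hxj, hxn⟩
    calc volume (⋃ j ∈ Finset.range (n + 2), closedBall (q j) s)
        ≤ volume ((⋃ j ∈ Finset.range (n + 1), closedBall (q j) s)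
            ∪ (closedBall (q (n + 1)) s \ closedBall (q n) s)) := measure_mono hsub
      _ ≤ volume (⋃ j ∈ Finset.range (n + 1), closedBall (q j) s)
            + volume (closedBall (q (n + 1)) s \ closedBall (q n) s) := measure_union_le _ _
      _ ≤ (ENNReal.ofReal (Real.pi * s ^ 2)
            + ∑ j ∈ Finset.range n, ENNReal.ofReal (2 * s * dist (q j) (q (j + 1))))
            + ENNReal.ofReal (2 * s * dist (q n) (q (n + 1))) :=
          add_le_add ih (ball_diff_bound (q n) (q (n + 1)) s hs)
      _ = ENNReal.ofReal (Real.pi * s ^ 2)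
            + ∑ j ∈ Finset.range (n + 1), ENNReal.ofReal (2 * s * dist (q j) (q (j + 1))) := by
          rw [Finset.sum_range_succ, add_assoc]

end CardDiscsAux

open MeasureTheory Metric Set

open ENNReal CardDiscsAux in
/-- If a continuous rectifiable path of length `ℓ` in the plane visits `k` closed
discs of radius `r` whose centers are pairwise at distance at least `2r`, then
`k·πr² ≤ 4rℓ + 4πr²`; equivalently `k ≤ 4(ℓ/(πr) + 1)`. -/
theorem card_disjoint_discs_visited_le (r ℓ : ℝ) (hr : 0 < r) (k : ℕ)
    (γ : ℝ → EuclideanSpace ℝ (Fin 2))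
    (hcont : ContinuousOn γ (Set.Icc 0 1))
    (hrect : eVariationOn γ (Set.Icc 0 1) ≠ ⊤)
    (hlen : ℓ = (eVariationOn γ (Set.Icc 0 1)).toReal)
    (c : Fin k → EuclideanSpace ℝ (Fin 2))
    (hsep : ∀ i j : Fin k, i ≠ j → 2 * r ≤ ‖c i - c j‖)
    (hvisit : ∀ i : Fin k,
      ((γ '' Set.Icc 0 1) ∩ Metric.closedBall (c i) r).Nonempty) :
    (k : ℝ) * (Real.pi * r ^ 2) ≤ 4 * r * ℓ + 4 * Real.pi * r ^ 2 ∧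
      (k : ℝ) ≤ 4 * (ℓ / (Real.pi * r) + 1) := by
  have hπ := Real.pi_pos
  have hℓ0 : 0 ≤ ℓ := hlen ▸ ENNReal.toReal_nonneg
  -- first inequality
  have main : (k : ℝ) * (Real.pi * r ^ 2) ≤ 4 * r * ℓ + 4 * Real.pi * r ^ 2 := by
    rcases Nat.eq_zero_or_pos k with hk | hk
    · subst hk; simp; nlinarith
    -- choose visit times
    have hex : ∀ i : Fin k, ∃ u ∈ Set.Icc (0:ℝ) 1, γ u ∈ closedBall (c i) r := by
      intro i
      obtain ⟨x, ⟨⟨u, hu, rfl⟩, hx⟩⟩ := hvisit i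
      exact ⟨u, hu, hx⟩
    choose t ht hmem using hex
    obtain ⟨m, hm⟩ : ∃ m, k = m + 1 := ⟨k - 1, by omega⟩
    set σ := Tuple.sort t with hσ
    have hmono : Monotone (t ∘ σ) := Tuple.monotone_sort t
    have hu : ∀ n : ℕ, min n m < k := fun n => by omega
    set u : ℕ → ℝ := fun n => t (σ ⟨min n m, hu n⟩) with hudef
    have humono : Monotone u := by
      intro a b hab
      exact hmono (show (⟨min a m, hu a⟩ : Fin k) ≤ ⟨min b m, hu b⟩ by
        simp only [Fin.mk_le_mk]; omega)
    set q : ℕ → EuclideanSpace ℝ (Fin 2) := fun n => γ (u n) with hqdef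
    -- sum of consecutive distances is at most ℓ
    have hsum : ∑ j ∈ Finset.range m, ENNReal.ofReal (2 * (2 * r) * dist (q j) (q (j + 1)))
        ≤ ENNReal.ofReal (4 * r * ℓ) := by
      have hterm : ∀ j, ENNReal.ofReal (2 * (2 * r) * dist (q j) (q (j + 1)))
          = ENNReal.ofReal (4 * r) * edist (γ (u (j + 1))) (γ (u j)) := by
        intro j
        rw [edist_dist, ← ENNReal.ofReal_mul (by positivity), dist_comm]
        norm_num
        ring_nf
        rfl
      calc ∑ j ∈ Finset.range m, ENNReal.ofReal (2 * (2 * r) * dist (q j) (q (j + 1)))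
          = ENNReal.ofReal (4 * r) * ∑ j ∈ Finset.range m, edist (γ (u (j + 1))) (γ (u j)) := by
            rw [Finset.mul_sum]; exact Finset.sum_congr rfl fun j _ => hterm j
        _ ≤ ENNReal.ofReal (4 * r) * eVariationOn γ (Set.Icc 0 1) := by
            gcongr
            exact eVariationOn.sum_le (f := γ) (n := m) humono (fun i => ht _)
        _ = ENNReal.ofReal (4 * r) * ENNReal.ofReal ℓ := by
            rw [hlen, ENNReal.ofReal_toReal hrect]
        _ = ENNReal.ofReal (4 * r * ℓ) := by
            rw [← ENNReal.ofReal_mul (by positivity)]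
    -- cover: small balls are inside the chain of big balls
    have hcover : (⋃ i : Fin k, ball (c i) r)
        ⊆ ⋃ j ∈ Finset.range (m + 1), closedBall (q j) (2 * r) := by
      intro x hx
      rw [mem_iUnion] at hx
      obtain ⟨i, hxi⟩ := hx
      set j := σ.symm i with hj
      have hjm : (j : ℕ) ≤ m := by omega
      have hqj : q (j : ℕ) = γ (t i) := by
        have h1 : (⟨min (j : ℕ) m, hu (j : ℕ)⟩ : Fin k) = j := by
          apply Fin.ext; simp [min_eq_left hjm]
        show γ (t (σ ⟨min (j : ℕ) m, hu (j : ℕ)⟩)) = γ (t i)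
        rw [h1, hj, Equiv.apply_symm_apply]
      simp only [mem_iUnion, Finset.mem_range, exists_prop]
      refine ⟨(j : ℕ), by omega, ?_⟩
      rw [mem_closedBall, hqj]
      have h2 : dist (γ (t i)) (c i) ≤ r := hmem i
      have h3 : dist x (c i) < r := hxi
      calc dist x (γ (t i)) ≤ dist x (c i) + dist (c i) (γ (t i)) := dist_triangle _ _ _
        _ ≤ r + r := by rw [dist_comm (c i)]; exact add_le_add h3.le h2
        _ = 2 * r := by ring
    -- disjointness of the small balls
    have hdisj : Pairwise (Function.onFun Disjoint fun i : Fin k => ball (c i) r) := by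
      intro i j hij
      apply Metric.ball_disjoint_ball
      rw [dist_eq_norm]
      linarith [hsep i j hij]
    -- lower bound
    have hlow : (k : ℝ≥0∞) * ENNReal.ofReal (Real.pi * r ^ 2)
        = volume (⋃ i : Fin k, ball (c i) r) := by
      rw [measure_iUnion hdisj (fun i => measurableSet_ball)]
      simp_rw [vol_ball_two _ r hr.le]
      rw [tsum_fintype]
      simp [Finset.sum_const, Finset.card_univ, Fintype.card_fin, nsmul_eq_mul]
    have key : (k : ℝ≥0∞) * ENNReal.ofReal (Real.pi * r ^ 2)
        ≤ ENNReal.ofReal (Real.pi * (2 * r) ^ 2) + ENNReal.ofReal (4 * r * ℓ) := by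
      rw [hlow]
      calc volume (⋃ i : Fin k, ball (c i) r)
          ≤ volume (⋃ j ∈ Finset.range (m + 1), closedBall (q j) (2 * r)) :=
            measure_mono hcover
        _ ≤ ENNReal.ofReal (Real.pi * (2 * r) ^ 2)
            + ∑ j ∈ Finset.range m, ENNReal.ofReal (2 * (2 * r) * dist (q j) (q (j + 1))) :=
            chain_bound q (2 * r) (by positivity) m
        _ ≤ ENNReal.ofReal (Real.pi * (2 * r) ^ 2) + ENNReal.ofReal (4 * r * ℓ) := by
            gcongr
    have key2 : ENNReal.ofReal ((k : ℝ) * (Real.pi * r ^ 2))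
        ≤ ENNReal.ofReal (4 * r * ℓ + 4 * Real.pi * r ^ 2) := by
      rw [ENNReal.ofReal_mul (by positivity), ENNReal.ofReal_natCast,
        ENNReal.ofReal_add (by positivity) (by positivity)]
      refine le_trans key ?_
      rw [show Real.pi * (2 * r) ^ 2 = 4 * Real.pi * r ^ 2 by ring]
      rw [add_comm]
    have := (ENNReal.ofReal_le_ofReal_iff (by positivity)).mp key2
    linarith
  refine ⟨main, ?_⟩
  have hπr2 : 0 < Real.pi * r ^ 2 := by positivity
  have h2 : (k : ℝ) ≤ (4 * r * ℓ + 4 * Real.pi * r ^ 2) / (Real.pi * r ^ 2) := by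
    rw [le_div_iff₀ hπr2]
    linarith
  refine h2.trans (le_of_eq ?_)
  field_simp
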